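/- Let A = k{x,y} be the differential polynomial algebra in two variables over a differential field k of characteristic 0, and C = Af_2(A) ∩ Tr_2(A). Then the set B_0 of automorphisms (x,y) ↦ (x + q(y), y), where q(y) ∈ k{y} is a differential polynomial all of whose homogeneous components have degree at least 2 (with respect to the degree function giving y^θ degree 1 + |θ|), is a complete and irredundant system of representatives for the left cosets of C in the triangular group Tr_2(A). -/

import Mathlib

open MvPolynomial

/-- The free commutative monoid of derivative operators on `m` derivations. -/
abbrev DOp (m : ℕ) := Fin m →₀ ℕ

/-- The differential polynomial algebra `k{x_1,…,x_n}` with `m` commuting derivations: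
the polynomial algebra on the variables `x_i^θ`. -/
abbrev DiffPoly (k : Type) [CommRing k] (n m : ℕ) := MvPolynomial (Fin n × DOp m) k

/-- The `i`-th derivation `δ_i` of `k{x_1,…,x_n}`, with `δ_i (x_j^θ) = x_j^{θ δ_i}`. -/
noncomputable def der (k : Type) [CommRing k] (n m : ℕ) (i : Fin m) :
    Derivation k (DiffPoly k n m) (DiffPoly k n m) :=
  MvPolynomial.mkDerivation k fun p => X (p.1, p.2 + Finsupp.single i 1)

/-- Application of a derivative operator `θ = δ_1^{i_1} ⋯ δ_m^{i_m}`. -/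
noncomputable def applyOp {k : Type} [CommRing k] {n m : ℕ} (θ : DOp m)
    (f : DiffPoly k n m) : DiffPoly k n m :=
  Fin.foldr m (fun i g => (⇑(der k n m i))^[θ i] g) f

/-- The differential subalgebra generated by a set: the smallest subalgebra containing it
and closed under all the derivations. -/
noncomputable def diffAdjoin (k : Type) [CommRing k] {n m : ℕ} (S : Set (DiffPoly k n m)) :
    Subalgebra k (DiffPoly k n m) :=
  sInf {T | S ⊆ T ∧ ∀ i : Fin m, ∀ x ∈ T, der k n m i x ∈ T}

/-- The weight of the variable `x_j^θ`: `1 + |θ|`. -/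
def dwt (n m : ℕ) : Fin n × DOp m → ℕ := fun p => 1 + p.2.sum fun _ v => v

/-- The degree of a differential polynomial. -/
noncomputable def ddeg {k : Type} [CommRing k] {n m : ℕ} (f : DiffPoly k n m) : ℕ :=
  weightedTotalDegree (dwt n m) f

/-- The highest homogeneous part of a differential polynomial. -/
noncomputable def dtop {k : Type} [CommRing k] {n m : ℕ} (f : DiffPoly k n m) :
    DiffPoly k n m :=
  weightedHomogeneousComponent (dwt n m) (ddeg f) f

/-- The variable `x` of `k{x,y}`. -/
noncomputable def xx (k : Type) [CommRing k] (m : ℕ) : DiffPoly k 2 m := X (0, 0)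

/-- The variable `y` of `k{x,y}`. -/
noncomputable def yy (k : Type) [CommRing k] (m : ℕ) : DiffPoly k 2 m := X (1, 0)

/-- A differential automorphism: an algebra automorphism commuting with all derivations. -/
def IsDiffAut {k : Type} [CommRing k] {m : ℕ}
    (φ : DiffPoly k 2 m ≃ₐ[k] DiffPoly k 2 m) : Prop :=
  ∀ i x, φ (der k 2 m i x) = der k 2 m i (φ x)

/-- An elementary automorphism: of the form `(a x + f(y), y)` or `(x, b y + g(x))`. -/
def IsElementary {k : Type} [CommRing k] {m : ℕ}
    (φ : DiffPoly k 2 m ≃ₐ[k] DiffPoly k 2 m) : Prop :=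
  IsDiffAut φ ∧
    ((∃ a : k, a ≠ 0 ∧ ∃ f ∈ diffAdjoin k {yy k m},
        φ (xx k m) = C a * xx k m + f ∧ φ (yy k m) = yy k m) ∨
     (∃ b : k, b ≠ 0 ∧ ∃ g ∈ diffAdjoin k {xx k m},
        φ (yy k m) = C b * yy k m + g ∧ φ (xx k m) = xx k m))

/-- A tame automorphism: a composition of elementary automorphisms. -/
def IsTame {k : Type} [CommRing k] {m : ℕ}
    (φ : DiffPoly k 2 m ≃ₐ[k] DiffPoly k 2 m) : Prop :=
  φ ∈ Subgroup.closure {ψ | IsElementary ψ}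

/-- An affine automorphism `(a₁x + b₁y + c₁, a₂x + b₂y + c₂)`. -/
def IsAffine {k : Type} [CommRing k] {m : ℕ}
    (φ : DiffPoly k 2 m ≃ₐ[k] DiffPoly k 2 m) : Prop :=
  IsDiffAut φ ∧ ∃ a₁ b₁ c₁ a₂ b₂ c₂ : k, a₁ * b₂ ≠ a₂ * b₁ ∧
    φ (xx k m) = C a₁ * xx k m + C b₁ * yy k m + C c₁ ∧
    φ (yy k m) = C a₂ * xx k m + C b₂ * yy k m + C c₂

/-- A triangular automorphism `(a x + f(y), b y + c)`. -/
def IsTriangular {k : Type} [CommRing k] {m : ℕ}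
    (φ : DiffPoly k 2 m ≃ₐ[k] DiffPoly k 2 m) : Prop :=
  IsDiffAut φ ∧ ∃ a b c : k, a ≠ 0 ∧ b ≠ 0 ∧ ∃ f ∈ diffAdjoin k {yy k m},
    φ (xx k m) = C a * xx k m + f ∧ φ (yy k m) = C b * yy k m + C c

/-- Membership in `C = Af₂(A) ∩ Tr₂(A)`. -/
def InC {k : Type} [CommRing k] {m : ℕ}
    (φ : DiffPoly k 2 m ≃ₐ[k] DiffPoly k 2 m) : Prop :=
  IsAffine φ ∧ IsTriangular φ

/-- Membership in the set `A₀ = {id} ∪ {(y, x + a y) : a ∈ k}` of coset representatives. -/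
def InA0 {k : Type} [CommRing k] {m : ℕ}
    (φ : DiffPoly k 2 m ≃ₐ[k] DiffPoly k 2 m) : Prop :=
  IsDiffAut φ ∧ (φ = 1 ∨ ∃ a : k,
    φ (xx k m) = yy k m ∧ φ (yy k m) = xx k m + C a * yy k m)

/-- Membership in the set `B₀ = {(x + q(y), y)}`, all homogeneous components of `q` of
degree at least `2`, of coset representatives. -/
def InB0 {k : Type} [CommRing k] {m : ℕ}
    (φ : DiffPoly k 2 m ≃ₐ[k] DiffPoly k 2 m) : Prop :=
  IsDiffAut φ ∧ ∃ q ∈ diffAdjoin k {yy k m},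
    (∀ d : ℕ, d < 2 → weightedHomogeneousComponent (dwt 2 m) d q = 0) ∧
    φ (xx k m) = xx k m + q ∧ φ (yy k m) = yy k m




theorem foldr_id' {A : Type*} : ∀ (n : ℕ) (F : Fin n → A → A),
    (∀ j x, F j x = x) → ∀ x : A, Fin.foldr n F x = x := by
  intro n
  induction n with
  | zero => intro F h x; simp
  | succ n ih =>
    intro F h x
    rw [Fin.foldr_succ, h, ih (fun i => F i.succ) (fun j x => h j.succ x)]

theorem foldr_pres {A : Type*} {P : A → Prop} : ∀ (n : ℕ) (F : Fin n → A → A),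
    (∀ j x, P x → P (F j x)) → ∀ x : A, P x → P (Fin.foldr n F x) := by
  intro n
  induction n with
  | zero => intro F h x hx; simpa
  | succ n ih =>
    intro F hF x hx
    rw [Fin.foldr_succ]
    exact hF _ _ (ih (fun i => F i.succ) (fun j x hx => hF j.succ x hx) x hx)

theorem foldr_comm {A : Type*} : ∀ (n : ℕ) (F : Fin n → A → A) (G : A → A),
    (∀ j x, G (F j x) = F j (G x)) → ∀ x : A,
    G (Fin.foldr n F x) = Fin.foldr n F (G x) := by
  intro n
  induction n with
  | zero => intro F G h x; simp
  | succ n ih =>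
    intro F G h x
    rw [Fin.foldr_succ, Fin.foldr_succ, h, ih (fun i => F i.succ) G (fun j x => h j.succ x)]

theorem foldr_comp {A : Type*} : ∀ (n : ℕ) (P Q : Fin n → A → A),
    (∀ j j' x, P j (Q j' x) = Q j' (P j x)) → ∀ x : A,
    Fin.foldr n (fun j y => P j (Q j y)) x = Fin.foldr n P (Fin.foldr n Q x) := by
  intro n
  induction n with
  | zero => intro P Q h x; simp
  | succ n ih =>
    intro P Q h x
    rw [Fin.foldr_succ, Fin.foldr_succ, Fin.foldr_succ]
    show P 0 (Q 0 _) = _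
    rw [ih (fun i => P i.succ) (fun i => Q i.succ) (fun j j' x => h j.succ j'.succ x),
      foldr_comm n (fun i => P i.succ) (Q 0) (fun j x => (h j.succ 0 x).symm)]

theorem foldr_single {A : Type*} : ∀ (n : ℕ) (F : Fin n → A → A) (i : Fin n),
    (∀ j, j ≠ i → ∀ x, F j x = x) → ∀ x : A, Fin.foldr n F x = F i x := by
  intro n
  induction n with
  | zero => exact fun F i => absurd i.2 (by simp)
  | succ n ih =>
    intro F i h x
    rw [Fin.foldr_succ]
    rcases Fin.eq_zero_or_eq_succ i with rfl | ⟨j, rfl⟩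
    · congr 1
      exact foldr_id' n _ (fun j x => h j.succ (by simp [Fin.ext_iff]) x) x
    · rw [h 0 (by simp [Fin.ext_iff, Fin.val_succ]), ih (fun i => F i.succ) j
        (fun j' hj' x => h j'.succ (by simpa [Fin.ext_iff] using hj') x)]
-- applyOp lemmas
section ApplyOp
variable {k : Type} [CommRing k] {n m : ℕ}

theorem der_X (i : Fin m) (p : Fin n × DOp m) :
    der k n m i (X p) = X (p.1, p.2 + Finsupp.single i 1) :=
  MvPolynomial.mkDerivation_X _ _ _

theorem der_comm (i j : Fin m) (f : DiffPoly k n m) :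
    der k n m i (der k n m j f) = der k n m j (der k n m i f) := by
  have h : ⁅der k n m i, der k n m j⁆ = 0 := by
    apply MvPolynomial.derivation_ext
    intro p
    rw [Derivation.commutator_apply, der_X, der_X, der_X, der_X]
    simp [add_assoc, add_comm (Finsupp.single j 1) (Finsupp.single i 1)]
  have h2 := congrArg (fun D : Derivation k (DiffPoly k n m) (DiffPoly k n m) => D f) h
  simp only [Derivation.commutator_apply, Derivation.zero_apply] at h2
  exact sub_eq_zero.mp h2

theorem derIter_comm (i j : Fin m) (a b : ℕ) (f : DiffPoly k n m) :
    (⇑(der k n m i))^[a] ((⇑(der k n m j))^[b] f) = (⇑(der k n m j))^[b] ((⇑(der k n m i))^[a] f) := by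
  have h : Function.Commute (⇑(der k n m i)) (⇑(der k n m j)) :=
    fun x => der_comm i j x
  exact (h.iterate_iterate a b) f

end ApplyOp
section ApplyOp2
variable {k : Type} [CommRing k] {n m : ℕ}

theorem applyOp_zero (f : DiffPoly k n m) : applyOp 0 f = f := by
  unfold applyOp
  exact foldr_id' m _ (fun j x => by simp) f

theorem applyOp_single (i : Fin m) (b : ℕ) (f : DiffPoly k n m) :
    applyOp (Finsupp.single i b) f = (⇑(der k n m i))^[b] f := by
  unfold applyOp
  rw [foldr_single m _ i (fun j hj x => by
    rw [show (Finsupp.single i b) j = 0 from Finsupp.single_eq_of_ne' (Ne.symm hj)]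
    rfl), Finsupp.single_eq_same]

theorem applyOp_add (θ₁ θ₂ : DOp m) (f : DiffPoly k n m) :
    applyOp (θ₁ + θ₂) f = applyOp θ₁ (applyOp θ₂ f) := by
  unfold applyOp
  have : ∀ g : DiffPoly k n m, ∀ i : Fin m, (⇑(der k n m i))^[(θ₁ + θ₂) i] g
      = (⇑(der k n m i))^[θ₁ i] ((⇑(der k n m i))^[θ₂ i] g) := by
    intro g i
    rw [Finsupp.add_apply, Function.iterate_add_apply]
  calc Fin.foldr m (fun i g => (⇑(der k n m i))^[(θ₁ + θ₂) i] g) f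
      = Fin.foldr m (fun i g => (⇑(der k n m i))^[θ₁ i] ((⇑(der k n m i))^[θ₂ i] g)) f := by
        congr 1; funext i g; exact this g i
    _ = _ := foldr_comp m (fun i g => (⇑(der k n m i))^[θ₁ i] g)
        (fun i g => (⇑(der k n m i))^[θ₂ i] g) (fun j j' x => derIter_comm j j' _ _ x) f

theorem der_applyOp (i : Fin m) (θ : DOp m) (f : DiffPoly k n m) :
    der k n m i (applyOp θ f) = applyOp θ (der k n m i f) := by
  unfold applyOp
  exact foldr_comm m _ _ (fun j x => derIter_comm i j 1 (θ j) x) f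

theorem applyOp_single_one (i : Fin m) (f : DiffPoly k n m) :
    applyOp (Finsupp.single i 1) f = der k n m i f := by
  rw [applyOp_single]; rfl

theorem applyOp_X (θ : DOp m) (j : Fin n) (σ : DOp m) :
    applyOp θ (X (j, σ) : DiffPoly k n m) = X (j, σ + θ) := by
  induction θ using Finsupp.induction generalizing σ with
  | zero => rw [applyOp_zero, add_zero]
  | single_add i b θ hiθ hb ih =>
    rw [applyOp_add, ih, applyOp_single]
    clear ih hb hiθ
    induction b with
    | zero => simp
    | succ b ihb =>
      rw [Function.iterate_succ_apply', ihb, der_X]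
      congr 2
      rw [Finsupp.single_add]
      simp only [add_assoc, add_left_comm, add_comm]

theorem derIter_neg (j : Fin m) (a : ℕ) (x : DiffPoly k n m) :
    (⇑(der k n m j))^[a] (-x) = -(⇑(der k n m j))^[a] x := by
  induction a with
  | zero => rfl
  | succ a ih => rw [Function.iterate_succ_apply', Function.iterate_succ_apply', ih, map_neg]

theorem applyOp_neg (θ : DOp m) (f : DiffPoly k n m) :
    applyOp θ (-f) = -applyOp θ f := by
  unfold applyOp
  exact (foldr_comm m _ (fun x => -x) (fun j x => (derIter_neg j (θ j) x).symm) f).symm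

theorem diffaut_applyOp {φ : DiffPoly k 2 m ≃ₐ[k] DiffPoly k 2 m} (hφ : IsDiffAut φ)
    (θ : DOp m) (f : DiffPoly k 2 m) : φ (applyOp θ f) = applyOp θ (φ f) := by
  unfold applyOp
  have key : ∀ (j : Fin m) (a : ℕ) (x : DiffPoly k 2 m),
      φ ((⇑(der k 2 m j))^[a] x) = (⇑(der k 2 m j))^[a] (φ x) := by
    intro j a x
    induction a with
    | zero => rfl
    | succ a ih => rw [Function.iterate_succ_apply', Function.iterate_succ_apply', ← ih, hφ]
  exact foldr_comm m _ (⇑φ) (fun j x => key j (θ j) x) f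

end ApplyOp2
section Supported
variable {k : Type} [CommRing k] {m : ℕ}

/-- The set of `y`-variables. -/
def Sy (m : ℕ) : Set (Fin 2 × DOp m) := {p | p.1 = 1}

theorem der_supported (i : Fin m) {f : DiffPoly k 2 m}
    (hf : f ∈ supported k (Sy m)) : der k 2 m i f ∈ supported k (Sy m) := by
  rw [supported_eq_adjoin_X] at hf ⊢
  induction hf using Algebra.adjoin_induction with
  | mem p hp =>
    obtain ⟨p, hp, rfl⟩ := hp
    rw [der_X]
    exact Algebra.subset_adjoin ⟨(p.1, p.2 + Finsupp.single i 1), hp, rfl⟩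
  | algebraMap r => rw [show algebraMap k (DiffPoly k 2 m) r = (algebraMap k _ r : DiffPoly k 2 m) from rfl, Derivation.map_algebraMap]; exact Subalgebra.zero_mem _
  | add x y hx hy ihx ihy => rw [map_add]; exact Subalgebra.add_mem _ ihx ihy
  | mul x y hx hy ihx ihy =>
    rw [Derivation.leibniz, smul_eq_mul, smul_eq_mul]
    exact Subalgebra.add_mem _ (Subalgebra.mul_mem _ hx ihy) (Subalgebra.mul_mem _ hy ihx)

theorem applyOp_supported (θ : DOp m) {f : DiffPoly k 2 m}
    (hf : f ∈ supported k (Sy m)) : applyOp θ f ∈ supported k (Sy m) := by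
  unfold applyOp
  refine foldr_pres m _ (fun j x hx => ?_) f hf
  induction θ j with
  | zero => exact hx
  | succ a ih => rw [Function.iterate_succ_apply']; exact der_supported j ih

theorem diffAdjoin_le_supported : diffAdjoin k {yy k m} ≤ supported k (Sy m) := by
  apply sInf_le
  constructor
  · intro z hz
    rw [Set.mem_singleton_iff] at hz
    subst hz
    rw [supported_eq_adjoin_X]
    exact Algebra.subset_adjoin ⟨(1, 0), rfl, rfl⟩
  · exact fun i x hx => der_supported i hx

theorem coeff_supported_eq_zero {f : DiffPoly k 2 m} (hf : f ∈ supported k (Sy m))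
    {s : (Fin 2 × DOp m) →₀ ℕ} {p : Fin 2 × DOp m} (hp : p ∈ s.support) (hp1 : p.1 = 0) :
    coeff s f = 0 := by
  by_contra h
  have : p ∈ f.vars := (mem_vars p).mpr ⟨s, by rwa [mem_support_iff], hp⟩
  have := (mem_supported.mp hf) this
  rw [Sy, Set.mem_setOf_eq, hp1] at this
  exact absurd this (by decide)

theorem aeval_fix {g : Fin 2 × DOp m → DiffPoly k 2 m}
    (hg : ∀ p : Fin 2 × DOp m, p.1 = 1 → g p = X p) {f : DiffPoly k 2 m}
    (hf : f ∈ supported k (Sy m)) : aeval g f = f := by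
  rw [supported_eq_adjoin_X] at hf
  induction hf using Algebra.adjoin_induction with
  | mem p hp =>
    obtain ⟨p, hp, rfl⟩ := hp
    rw [aeval_X]
    exact hg p hp
  | algebraMap r => exact aeval_C g r
  | add x y hx hy ihx ihy => rw [map_add, ihx, ihy]
  | mul x y hx hy ihx ihy => rw [map_mul, ihx, ihy]

end Supported
section Beta
variable {k : Type} [CommRing k] {m : ℕ}

/-- The triangular shift `x ↦ x + q(y)`, `y ↦ y` as an algebra homomorphism. -/
noncomputable def bHom (q : DiffPoly k 2 m) : DiffPoly k 2 m →ₐ[k] DiffPoly k 2 m :=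
  aeval (fun p => X p + if p.1 = 0 then applyOp p.2 q else 0)

theorem bHom_X (q : DiffPoly k 2 m) (p : Fin 2 × DOp m) :
    bHom q (X p) = X p + if p.1 = 0 then applyOp p.2 q else 0 :=
  aeval_X _ p

theorem bHom_fix (q : DiffPoly k 2 m) {f : DiffPoly k 2 m}
    (hf : f ∈ supported k (Sy m)) : bHom q f = f := by
  refine aeval_fix (fun p hp => ?_) hf
  rw [if_neg (by rw [hp]; decide), add_zero]

theorem bHom_comp (q : DiffPoly k 2 m) (hq : q ∈ supported k (Sy m)) :
    (bHom q).comp (bHom (-q)) = AlgHom.id k (DiffPoly k 2 m) := by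
  apply MvPolynomial.algHom_ext
  intro p
  rw [AlgHom.comp_apply, AlgHom.id_apply, bHom_X, map_add, bHom_X]
  by_cases hp : p.1 = 0
  · rw [if_pos hp, if_pos hp, applyOp_neg,
      bHom_fix q (Subalgebra.neg_mem _ (applyOp_supported p.2 hq))]
    ring
  · rw [if_neg hp, if_neg hp, map_zero, add_zero, add_zero]

/-- The triangular shift `x ↦ x + q(y)`, `y ↦ y` as an algebra automorphism. -/
noncomputable def bEquiv (q : DiffPoly k 2 m) (hq : q ∈ supported k (Sy m)) :
    DiffPoly k 2 m ≃ₐ[k] DiffPoly k 2 m :=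
  AlgEquiv.ofAlgHom (bHom q) (bHom (-q)) (bHom_comp q hq)
    (by have := bHom_comp (-q) (Subalgebra.neg_mem _ hq); rwa [neg_neg] at this)

theorem bEquiv_apply (q : DiffPoly k 2 m) (hq : q ∈ supported k (Sy m))
    (f : DiffPoly k 2 m) : bEquiv q hq f = bHom q f := rfl

theorem bEquiv_symm_apply (q : DiffPoly k 2 m) (hq : q ∈ supported k (Sy m))
    (f : DiffPoly k 2 m) : (bEquiv q hq).symm f = bHom (-q) f := rfl

theorem bEquiv_symm_xx (q : DiffPoly k 2 m) (hq : q ∈ supported k (Sy m)) :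
    (bEquiv q hq).symm (xx k m) = xx k m + (-q) := by
  rw [xx, bEquiv_symm_apply, bHom_X, if_pos rfl, applyOp_zero]

theorem bEquiv_symm_yy (q : DiffPoly k 2 m) (hq : q ∈ supported k (Sy m)) :
    (bEquiv q hq).symm (yy k m) = yy k m := by
  rw [yy, bEquiv_symm_apply, bHom_X, if_neg (fun h => one_ne_zero h), add_zero]

theorem bEquiv_symm_fix (q : DiffPoly k 2 m) (hq : q ∈ supported k (Sy m))
    {f : DiffPoly k 2 m} (hf : f ∈ supported k (Sy m)) : (bEquiv q hq).symm f = f := by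
  rw [bEquiv_symm_apply]
  exact bHom_fix (-q) hf

theorem bEquiv_diffaut (q : DiffPoly k 2 m) (hq : q ∈ supported k (Sy m)) :
    IsDiffAut (bEquiv q hq) := by
  intro i f
  induction f using MvPolynomial.induction_on with
  | C a =>
    rw [show (C a : DiffPoly k 2 m) = algebraMap k _ a from rfl, Derivation.map_algebraMap,
      map_zero, AlgEquiv.commutes, Derivation.map_algebraMap]
  | add f g ihf ihg => rw [map_add, map_add, map_add, ihf, ihg, map_add]
  | mul_X f p ih =>
    have hX : (bEquiv q hq) (der k 2 m i (X p)) = der k 2 m i ((bEquiv q hq) (X p)) := by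
      rw [der_X, bEquiv_apply, bEquiv_apply, bHom_X, bHom_X, map_add, der_X]
      by_cases hp : p.1 = 0
      · rw [if_pos hp, if_pos (show (p.1, p.2 + Finsupp.single i 1).1 = 0 from hp)]
        congr 1
        show applyOp (p.2 + Finsupp.single i 1) q = der k 2 m i (applyOp p.2 q)
        rw [der_applyOp, applyOp_add, applyOp_single_one]
      · rw [if_neg hp, if_neg (show ¬(p.1, p.2 + Finsupp.single i 1).1 = 0 from hp), map_zero]
    simp only [Derivation.leibniz, smul_eq_mul, map_add, map_mul, ih, hX]

theorem bEquiv_xx (q : DiffPoly k 2 m) (hq : q ∈ supported k (Sy m)) :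
    bEquiv q hq (xx k m) = xx k m + q := by
  rw [xx, bEquiv_apply, bHom_X, if_pos rfl, applyOp_zero]

theorem bEquiv_yy (q : DiffPoly k 2 m) (hq : q ∈ supported k (Sy m)) :
    bEquiv q hq (yy k m) = yy k m := by
  rw [yy, bEquiv_apply, bHom_X, if_neg (fun h => one_ne_zero h), add_zero]

end Beta
section Coeffs
variable {k : Type} [CommRing k] {m : ℕ}

/-- The exponent of the monomial `x`. -/
noncomputable def ex (m : ℕ) : (Fin 2 × DOp m) →₀ ℕ := Finsupp.single ((0 : Fin 2), (0 : DOp m)) 1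
/-- The exponent of the monomial `y`. -/
noncomputable def ey (m : ℕ) : (Fin 2 × DOp m) →₀ ℕ := Finsupp.single ((1 : Fin 2), (0 : DOp m)) 1

theorem pxy_ne : ((0 : Fin 2), (0 : DOp m)) ≠ ((1 : Fin 2), (0 : DOp m)) :=
  fun h => (show (0 : Fin 2) ≠ 1 by decide) (congrArg Prod.fst h)

theorem ex_ne_ey : ex m ≠ ey m :=
  fun h => pxy_ne (Finsupp.single_left_injective one_ne_zero h)

theorem ex_ne_zero : ex m ≠ 0 := fun h => one_ne_zero (Finsupp.single_eq_zero.mp h)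
theorem ey_ne_zero : ey m ≠ 0 := fun h => one_ne_zero (Finsupp.single_eq_zero.mp h)

theorem dwt_pos (p : Fin 2 × DOp m) : 1 ≤ dwt 2 m p := Nat.le_add_right 1 _

theorem weight_single (p : Fin 2 × DOp m) (b : ℕ) :
    Finsupp.weight (dwt 2 m) (Finsupp.single p b) = b * dwt 2 m p := by
  rw [Finsupp.weight_apply, Finsupp.sum_single_index] <;> simp

theorem weight_ex : Finsupp.weight (dwt 2 m) (ex m) = 1 := by
  rw [ex, weight_single]; simp [dwt]

theorem weight_ey : Finsupp.weight (dwt 2 m) (ey m) = 1 := by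
  rw [ey, weight_single]; simp [dwt]

theorem weight_classify (s : (Fin 2 × DOp m) →₀ ℕ)
    (h : Finsupp.weight (dwt 2 m) s ≤ 1) : s = 0 ∨ s = ex m ∨ s = ey m := by
  have ht : s.sum (fun _ c => c) ≤ Finsupp.weight (dwt 2 m) s := by
    rw [Finsupp.weight_apply]
    refine Finset.sum_le_sum fun p _ => ?_
    have := dwt_pos p
    simp only [smul_eq_mul]
    exact Nat.le_mul_of_pos_right _ (dwt_pos p)
  by_cases hs : s = 0
  · exact Or.inl hs
  · right
    obtain ⟨p, hp⟩ := Finsupp.support_nonempty_iff.mpr hs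
    have hp1 : 1 ≤ s p := Nat.one_le_iff_ne_zero.mpr (Finsupp.mem_support_iff.mp hp)
    have hsp : s p ≤ 1 := by
      have h1 : s p ≤ s.sum (fun _ c => c) := by
        rw [Finsupp.sum]
        exact Finset.single_le_sum (f := fun r => s r) (fun _ _ => Nat.zero_le _) hp
      exact le_trans h1 (le_trans ht h)
    have hsp1 : s p = 1 := le_antisymm hsp hp1
    have hsupp : s.support = {p} := by
      apply Finset.eq_singleton_iff_unique_mem.mpr
      refine ⟨hp, fun q hq => ?_⟩
      by_contra hqp
      have h2 : s p + s q ≤ s.sum (fun _ c => c) := by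
        rw [Finsupp.sum]
        rw [show s p + s q = ∑ r ∈ ({p, q} : Finset _), s r from (Finset.sum_pair (fun h => hqp h.symm)).symm]
        exact Finset.sum_le_sum_of_subset (by intro r hr; simp at hr; rcases hr with rfl | rfl <;> [exact hp; exact hq])
      have hq1 : 1 ≤ s q := Nat.one_le_iff_ne_zero.mpr (Finsupp.mem_support_iff.mp hq)
      omega
    have hseq : s = Finsupp.single p 1 := by
      ext r
      rcases eq_or_ne r p with rfl | hrp
      · rw [hsp1, Finsupp.single_eq_same]
      · rw [Finsupp.single_eq_of_ne' (Ne.symm hrp)]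
        by_contra hr
        have : r ∈ s.support := Finsupp.mem_support_iff.mpr hr
        rw [hsupp, Finset.mem_singleton] at this
        exact hrp this
    have hw : dwt 2 m p ≤ 1 := by
      rw [hseq, weight_single, one_mul] at h
      exact h
    have hp2 : p.2 = 0 := by
      have : p.2.sum (fun _ v => v) = 0 := by
        have := dwt_pos p
        simp only [dwt] at hw
        omega
      ext j
      by_cases hj : j ∈ p.2.support
      · exact Finset.sum_eq_zero_iff.mp this j hj
      · simpa using Finsupp.notMem_support_iff.mp hj
    have hp1' : p.1 = 0 ∨ p.1 = 1 := by
      have h2 := p.1.isLt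
      rcases (by omega : (p.1 : ℕ) = 0 ∨ (p.1 : ℕ) = 1) with h | h
      · exact Or.inl (Fin.ext (by simpa using h))
      · exact Or.inr (Fin.ext (by simpa using h))
    rcases hp1' with h1 | h1
    · left; rw [hseq, ex, show p = ((0 : Fin 2), (0 : DOp m)) from Prod.ext h1 hp2]
    · right; rw [hseq, ey, show p = ((1 : Fin 2), (0 : DOp m)) from Prod.ext h1 hp2]

end Coeffs
section Key
variable {k : Type} [CommRing k] {m : ℕ}

theorem lowcoeff {q : DiffPoly k 2 m}
    (hq : ∀ d : ℕ, d < 2 → weightedHomogeneousComponent (dwt 2 m) d q = 0)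
    {s : (Fin 2 × DOp m) →₀ ℕ} (hs : Finsupp.weight (dwt 2 m) s ≤ 1) :
    coeff s q = 0 := by
  classical
  have h := congrArg (coeff s) (hq (Finsupp.weight (dwt 2 m) s) (by omega))
  rwa [coeff_weightedHomogeneousComponent, if_pos rfl, coeff_zero] at h

theorem diffaut_mul {φ ψ : DiffPoly k 2 m ≃ₐ[k] DiffPoly k 2 m}
    (hφ : IsDiffAut φ) (hψ : IsDiffAut ψ) : IsDiffAut (φ * ψ) := by
  intro i z
  rw [AlgEquiv.mul_apply, AlgEquiv.mul_apply, hψ, hφ]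

theorem diffaut_symm {φ : DiffPoly k 2 m ≃ₐ[k] DiffPoly k 2 m}
    (hφ : IsDiffAut φ) : IsDiffAut φ.symm := by
  intro i z
  conv_lhs => rw [show z = φ (φ.symm z) from (φ.apply_symm_apply z).symm]
  rw [← hφ, AlgEquiv.symm_apply_apply]

theorem diffaut_inv {φ : DiffPoly k 2 m ≃ₐ[k] DiffPoly k 2 m}
    (hφ : IsDiffAut φ) : IsDiffAut φ⁻¹ :=
  diffaut_symm hφ

theorem aequiv_C (φ : DiffPoly k 2 m ≃ₐ[k] DiffPoly k 2 m) (a : k) : φ (C a) = C a :=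
  φ.commutes a

theorem diffaut_ext {φ φ' : DiffPoly k 2 m ≃ₐ[k] DiffPoly k 2 m}
    (hφ : IsDiffAut φ) (hφ' : IsDiffAut φ')
    (hx : φ (xx k m) = φ' (xx k m)) (hy : φ (yy k m) = φ' (yy k m)) : φ = φ' := by
  have hX : ∀ p : Fin 2 × DOp m, φ (X p) = φ' (X p) := by
    rintro ⟨j, θ⟩
    have hXj : (X (j, θ) : DiffPoly k 2 m) = applyOp θ (X (j, 0)) := by
      rw [applyOp_X, zero_add]
    rw [hXj, diffaut_applyOp hφ, diffaut_applyOp hφ']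
    congr 1
    have h2 := j.isLt
    rcases (by omega : (j : ℕ) = 0 ∨ (j : ℕ) = 1) with h | h
    · rw [show j = 0 from Fin.ext (by simpa using h)]; exact hx
    · rw [show j = 1 from Fin.ext (by simpa using h)]; exact hy
  apply AlgEquiv.coe_algHom_injective
  exact MvPolynomial.algHom_ext hX

theorem keyEq {a a' d d' c c' : k} {q q' : DiffPoly k 2 m}
    (hq : q ∈ supported k (Sy m)) (hq' : q' ∈ supported k (Sy m))
    (hlq : ∀ e : ℕ, e < 2 → weightedHomogeneousComponent (dwt 2 m) e q = 0)
    (hlq' : ∀ e : ℕ, e < 2 → weightedHomogeneousComponent (dwt 2 m) e q' = 0)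
    (heq : C a * xx k m + C a * q + C d * yy k m + C c
      = C a' * xx k m + C a' * q' + C d' * yy k m + C c') :
    a = a' ∧ d = d' ∧ c = c' ∧ C a * q = C a' * q' := by
  classical
  have hqx : coeff (Finsupp.single (0 : Fin 2 × DOp m) 1) q = 0 :=
    lowcoeff hlq (le_of_eq weight_ex)
  have hqx' : coeff (Finsupp.single (0 : Fin 2 × DOp m) 1) q' = 0 :=
    lowcoeff hlq' (le_of_eq weight_ex)
  have hqy : coeff (Finsupp.single ((1 : Fin 2), (0 : DOp m)) 1) q = 0 :=
    lowcoeff hlq (le_of_eq weight_ey)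
  have hqy' : coeff (Finsupp.single ((1 : Fin 2), (0 : DOp m)) 1) q' = 0 :=
    lowcoeff hlq' (le_of_eq weight_ey)
  have hq0 : coeff 0 q = 0 := lowcoeff hlq (by rw [map_zero]; omega)
  have hq0' : coeff 0 q' = 0 := lowcoeff hlq' (by rw [map_zero]; omega)
  have haa : a = a' := by
    have h := congrArg (coeff (Finsupp.single (0 : Fin 2 × DOp m) 1)) heq
    simp [coeff_add, coeff_C_mul, xx, yy, coeff_X', coeff_C,
      Finsupp.single_eq_single_iff, Prod.ext_iff, eq_comm (a := (0 : (Fin 2 × DOp m) →₀ ℕ)),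
      Finsupp.single_eq_zero, hqx, hqx'] at h
    exact h
  have hdd : d = d' := by
    have h := congrArg (coeff (Finsupp.single ((1 : Fin 2), (0 : DOp m)) 1)) heq
    simp [coeff_add, coeff_C_mul, xx, yy, coeff_X', coeff_C,
      Finsupp.single_eq_single_iff, Prod.ext_iff, eq_comm (a := (0 : (Fin 2 × DOp m) →₀ ℕ)),
      Finsupp.single_eq_zero, hqy, hqy'] at h
    exact h
  have hcc : c = c' := by
    have h := congrArg (coeff (0 : (Fin 2 × DOp m) →₀ ℕ)) heq
    simp [coeff_add, coeff_C_mul, xx, yy, coeff_X', coeff_C,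
      eq_comm (a := (0 : (Fin 2 × DOp m) →₀ ℕ)), Finsupp.single_eq_zero, hq0, hq0'] at h
    exact h
  refine ⟨haa, hdd, hcc, ?_⟩
  subst haa hdd hcc
  linear_combination heq

end Key
/-- `B₀ = {(x+q(y), y) : q has all homogeneous components of degree ≥ 2}` is a complete
and irredundant system of representatives of the left cosets of `C = Af₂(A) ∩ Tr₂(A)` in
`Tr₂(A)`: every triangular automorphism factors uniquely as `β ∘ μ`, `β ∈ B₀`, `μ ∈ C`. -/
theorem stmt5 {k : Type} [Field k] [CharZero k] {m : ℕ}
    (ψ : DiffPoly k 2 m ≃ₐ[k] DiffPoly k 2 m) (hψ : IsTriangular ψ) :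
    ∃! p : (DiffPoly k 2 m ≃ₐ[k] DiffPoly k 2 m) × (DiffPoly k 2 m ≃ₐ[k] DiffPoly k 2 m),
      InB0 p.1 ∧ InC p.2 ∧ ψ = p.1 * p.2 := by
  classical
  obtain ⟨hψd, a, b, c, ha, hb, f, hf, hψx, hψy⟩ := hψ
  set cy : k := coeff (Finsupp.single ((1 : Fin 2), (0 : DOp m)) 1) f with hcy
  set c0 : k := coeff 0 f with hc0
  set q : DiffPoly k 2 m := C a⁻¹ * (f - C cy * yy k m - C c0) with hqdef
  clear_value q
  have hyyA : yy k m ∈ diffAdjoin k {yy k m} :=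
    Algebra.mem_sInf.mpr fun T hT => hT.1 (Set.mem_singleton _)
  have hq_adj : q ∈ diffAdjoin k {yy k m} := by
    rw [hqdef]
    exact mul_mem (Subalgebra.algebraMap_mem _ a⁻¹)
      (sub_mem (sub_mem hf (mul_mem (Subalgebra.algebraMap_mem _ cy) hyyA))
        (Subalgebra.algebraMap_mem _ c0))
  have hq_sup : q ∈ supported k (Sy m) := diffAdjoin_le_supported hq_adj
  have hfsup : f ∈ supported k (Sy m) := diffAdjoin_le_supported hf
  have hCaq : C a * q = f - C cy * yy k m - C c0 := by
    rw [hqdef, ← mul_assoc, ← C_mul, mul_inv_cancel₀ ha, C_1, one_mul]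
  have hfex : coeff (Finsupp.single (0 : Fin 2 × DOp m) 1) f = 0 :=
    coeff_supported_eq_zero hfsup
      (by rw [Finsupp.support_single_ne_zero _ one_ne_zero]; exact Finset.mem_singleton_self _)
      rfl
  have hlow : ∀ e : ℕ, e < 2 → weightedHomogeneousComponent (dwt 2 m) e q = 0 := by
    intro e he
    apply MvPolynomial.ext
    intro s
    rw [coeff_weightedHomogeneousComponent, coeff_zero]
    split_ifs with hw
    · rcases weight_classify s (by rw [hw]; omega) with rfl | rfl | rfl
      · rw [hqdef]
        simp [coeff_C_mul, coeff_sub, yy, coeff_X', coeff_C,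
          eq_comm (a := (0 : (Fin 2 × DOp m) →₀ ℕ)), Finsupp.single_eq_zero, ← hc0]
      · rw [hqdef, ex]
        simp [coeff_C_mul, coeff_sub, yy, coeff_X', coeff_C,
          Finsupp.single_eq_single_iff, Prod.ext_iff,
          eq_comm (a := (0 : (Fin 2 × DOp m) →₀ ℕ)), Finsupp.single_eq_zero, hfex]
        exact Or.inr hfex
      · rw [hqdef, ey]
        simp [coeff_C_mul, coeff_sub, yy, coeff_X', coeff_C,
          Finsupp.single_eq_single_iff, Prod.ext_iff,
          eq_comm (a := (0 : (Fin 2 × DOp m) →₀ ℕ)), Finsupp.single_eq_zero, ← hcy]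
    · rfl
  have hβd := bEquiv_diffaut q hq_sup
  have hfac : ψ = bEquiv q hq_sup * ((bEquiv q hq_sup)⁻¹ * ψ) := (mul_inv_cancel_left _ _).symm
  have hμx : ((bEquiv q hq_sup)⁻¹ * ψ) (xx k m)
      = C a * xx k m + C cy * yy k m + C c0 := by
    rw [AlgEquiv.mul_apply, hψx]
    show (bEquiv q hq_sup).symm _ = _
    rw [map_add, map_mul, aequiv_C, bEquiv_symm_xx, bEquiv_symm_fix q hq_sup hfsup]
    linear_combination -hCaq
  have hμy : ((bEquiv q hq_sup)⁻¹ * ψ) (yy k m) = C b * yy k m + C c := by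
    rw [AlgEquiv.mul_apply, hψy]
    show (bEquiv q hq_sup).symm _ = _
    rw [map_add, map_mul, aequiv_C, aequiv_C, bEquiv_symm_yy]
  have hμd : IsDiffAut ((bEquiv q hq_sup)⁻¹ * ψ) := diffaut_mul (diffaut_inv hβd) hψd
  refine ⟨(bEquiv q hq_sup, (bEquiv q hq_sup)⁻¹ * ψ), ⟨?_, ⟨?_, ?_⟩, hfac⟩, ?_⟩
  · exact ⟨hβd, q, hq_adj, hlow, bEquiv_xx q hq_sup, bEquiv_yy q hq_sup⟩
  · -- IsAffine μ
    refine ⟨hμd, a, cy, c0, 0, b, c, by rw [zero_mul]; exact mul_ne_zero ha hb, hμx, ?_⟩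
    rw [hμy, C_0, zero_mul, zero_add]
  · -- IsTriangular μ
    refine ⟨hμd, a, b, c, ha, hb, C cy * yy k m + C c0,
      add_mem (mul_mem (Subalgebra.algebraMap_mem _ cy) hyyA) (Subalgebra.algebraMap_mem _ c0),
      by rw [hμx, add_assoc], hμy⟩
  · -- uniqueness
    rintro ⟨β', μ'⟩ ⟨⟨hβ'd, q', hq'A, hlow', hβ'x, hβ'y⟩,
      ⟨⟨hμ'd, a₁, b₁, c₁, a₂, b₂, c₂, hdet, hμ'x, hμ'y⟩, _⟩, hfact⟩
    have hbig : C a * xx k m + C a * q + C cy * yy k m + C c0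
        = C a₁ * xx k m + C a₁ * q' + C b₁ * yy k m + C c₁ := by
      have h1 : ψ (xx k m) = β' (μ' (xx k m)) := by rw [hfact, AlgEquiv.mul_apply]
      rw [hψx, hμ'x, map_add, map_add, map_mul, map_mul, aequiv_C, aequiv_C, aequiv_C,
        hβ'x, hβ'y] at h1
      linear_combination h1 + hCaq
    obtain ⟨haa, hdd, hcc, hqq⟩ := keyEq hq_sup (diffAdjoin_le_supported hq'A)
      hlow hlow' hbig
    have hCa : (C a : DiffPoly k 2 m) ≠ 0 := fun h => ha (by simpa using congrArg (coeff 0) h)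
    have hq'q : q' = q := by
      rw [← haa] at hqq
      exact (mul_left_cancel₀ hCa hqq).symm
    have hββ : β' = bEquiv q hq_sup :=
      diffaut_ext hβ'd hβd (by rw [hβ'x, hq'q, bEquiv_xx]) (by rw [hβ'y, bEquiv_yy])
    have h5 : β' * μ' = bEquiv q hq_sup * ((bEquiv q hq_sup)⁻¹ * ψ) := hfact.symm.trans hfac
    rw [hββ] at h5
    exact Prod.ext hββ (mul_left_cancel h5)
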